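/- For all real numbers x₁, x₂, x₃, μ and all natural numbers C₂, C₃, the following identity holds: 2 · Σ_{z₃=0}^{C₃} Σ_{w₂=0}^{z₃} Σ_{z₂=0}^{C₂} Σ_{w₁=0}^{z₂} C(C₃,z₃)·(3μ)^{z₃}·(1−3μ)^{C₃−z₃} · C(z₃,w₂)·(1/2)^{z₃} · C(C₂,z₂)·(2μ)^{z₂}·(1−2μ)^{C₂−z₂} · C(z₂,w₁)·(1/2)^{z₂} · x₁^{w₁} · x₂^{C₂−z₂+w₂} · x₃^{C₃−z₃} = 2 · f₂^{C₂} · f₃^{C₃}, where f₂ = x₂ + μ(x₁+1−2x₂) and f₃ = x₃ + (3μ/2)(x₂+1−2x₃). (This is the generating-function identity for the variable-splitting transition kernel M_UC of #DPLL-UC.) -/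

import Mathlib

open Finset in
private lemma binom_sum (a b : ℝ) (n : ℕ) :
    ∑ k ∈ range (n + 1), (n.choose k : ℝ) * a ^ k * b ^ (n - k) = (a + b) ^ n := by
  rw [add_pow]
  exact Finset.sum_congr rfl fun k _ => by ring

open Finset in
private lemma one_add_pow (x : ℝ) (n : ℕ) :
    ∑ w ∈ range (n + 1), (n.choose w : ℝ) * x ^ w = (1 + x) ^ n := by
  have := binom_sum x 1 n
  simp only [one_pow, mul_one] at this
  rw [this, add_comm]

open Finset in
private lemma key_sum (p q x : ℝ) (n : ℕ) :
    ∑ z ∈ range (n + 1), ∑ w ∈ range (z + 1),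
      (n.choose z : ℝ) * p ^ z * q ^ (n - z) * (z.choose w : ℝ) * (1 / 2) ^ z * x ^ w
    = (p * (1 + x) / 2 + q) ^ n := by
  have h : ∀ z ∈ range (n + 1),
      (∑ w ∈ range (z + 1),
        (n.choose z : ℝ) * p ^ z * q ^ (n - z) * (z.choose w : ℝ) * (1 / 2) ^ z * x ^ w)
      = (n.choose z : ℝ) * (p * (1 + x) / 2) ^ z * q ^ (n - z) := by
    intro z _
    have h1 : (∑ w ∈ range (z + 1),
        (n.choose z : ℝ) * p ^ z * q ^ (n - z) * (z.choose w : ℝ) * (1 / 2) ^ z * x ^ w)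
        = (n.choose z : ℝ) * p ^ z * q ^ (n - z) * (1 / 2) ^ z *
          ∑ w ∈ range (z + 1), (z.choose w : ℝ) * x ^ w := by
      rw [Finset.mul_sum]
      exact Finset.sum_congr rfl fun w _ => by ring
    have hp : (p * (1 + x) / 2) ^ z = p ^ z * (1 / 2) ^ z * (1 + x) ^ z := by
      rw [show p * (1 + x) / 2 = p * (1 / 2) * (1 + x) from by ring, mul_pow, mul_pow]
    rw [h1, one_add_pow, hp]
    ring
  rw [Finset.sum_congr rfl h, ← binom_sum]

open Finset in
/-- Generating-function identity for the variable-splitting transition kernel M_UC of #DPLL-UC. -/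
theorem variable_splitting_generating_function (x₁ x₂ x₃ μ : ℝ) (C₂ C₃ : ℕ) :
    (2 * ∑ z₃ ∈ range (C₃ + 1), ∑ w₂ ∈ range (z₃ + 1),
     ∑ z₂ ∈ range (C₂ + 1), ∑ w₁ ∈ range (z₂ + 1),
       (C₃.choose z₃ : ℝ) * (3 * μ) ^ z₃ * (1 - 3 * μ) ^ (C₃ - z₃) *
       (z₃.choose w₂ : ℝ) * (1 / 2) ^ z₃ *
       (C₂.choose z₂ : ℝ) * (2 * μ) ^ z₂ * (1 - 2 * μ) ^ (C₂ - z₂) *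
       (z₂.choose w₁ : ℝ) * (1 / 2) ^ z₂ *
       x₁ ^ w₁ * x₂ ^ (C₂ - z₂ + w₂) * x₃ ^ (C₃ - z₃)) =
    2 * (x₂ + μ * (x₁ + 1 - 2 * x₂)) ^ C₂ *
    (x₃ + (3 * μ / 2) * (x₂ + 1 - 2 * x₃)) ^ C₃ := by
  have split : (∑ z₃ ∈ range (C₃ + 1), ∑ w₂ ∈ range (z₃ + 1),
     ∑ z₂ ∈ range (C₂ + 1), ∑ w₁ ∈ range (z₂ + 1),
       (C₃.choose z₃ : ℝ) * (3 * μ) ^ z₃ * (1 - 3 * μ) ^ (C₃ - z₃) *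
       (z₃.choose w₂ : ℝ) * (1 / 2) ^ z₃ *
       (C₂.choose z₂ : ℝ) * (2 * μ) ^ z₂ * (1 - 2 * μ) ^ (C₂ - z₂) *
       (z₂.choose w₁ : ℝ) * (1 / 2) ^ z₂ *
       x₁ ^ w₁ * x₂ ^ (C₂ - z₂ + w₂) * x₃ ^ (C₃ - z₃)) =
     (∑ z₃ ∈ range (C₃ + 1), ∑ w₂ ∈ range (z₃ + 1),
       (C₃.choose z₃ : ℝ) * (3 * μ) ^ z₃ * ((1 - 3 * μ) * x₃) ^ (C₃ - z₃) *
       (z₃.choose w₂ : ℝ) * (1 / 2) ^ z₃ * x₂ ^ w₂) *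
     (∑ z₂ ∈ range (C₂ + 1), ∑ w₁ ∈ range (z₂ + 1),
       (C₂.choose z₂ : ℝ) * (2 * μ) ^ z₂ * ((1 - 2 * μ) * x₂) ^ (C₂ - z₂) *
       (z₂.choose w₁ : ℝ) * (1 / 2) ^ z₂ * x₁ ^ w₁) := by
    rw [Finset.sum_mul]
    refine Finset.sum_congr rfl fun z₃ _ => ?_
    rw [Finset.sum_mul]
    refine Finset.sum_congr rfl fun w₂ _ => ?_
    rw [Finset.mul_sum]
    refine Finset.sum_congr rfl fun z₂ _ => ?_
    rw [Finset.mul_sum]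
    refine Finset.sum_congr rfl fun w₁ _ => ?_
    rw [pow_add, mul_pow (1 - 3 * μ) x₃, mul_pow (1 - 2 * μ) x₂]
    ring
  rw [split, key_sum, key_sum]
  have e2 : (2 * μ) * (1 + x₁) / 2 + (1 - 2 * μ) * x₂ = x₂ + μ * (x₁ + 1 - 2 * x₂) := by ring
  have e3 : (3 * μ) * (1 + x₂) / 2 + (1 - 3 * μ) * x₃ = x₃ + 3 * μ / 2 * (x₂ + 1 - 2 * x₃) := by
    ring
  rw [e2, e3]
  ring
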